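/- Let R be a reduced commutative ring and S ⊆ reg(R) a multiplicatively closed subset. Then R is an integral domain if and only if there exists an ideal of R that is simultaneously an S-prime ideal and an S-n-ideal. -/

import Mathlib

/-- `I` is an `S`-`n`-ideal: `I` is disjoint from `S` and there is `s ∈ S` such that
whenever `a * b ∈ I` and `s * a` is not nilpotent, then `s * b ∈ I`. -/
def IsSnIdeal {R : Type*} [CommRing R] (S : Set R) (I : Ideal R) : Prop :=
  Disjoint S (I : Set R) ∧
    ∃ s ∈ S, ∀ a b : R, a * b ∈ I → s * a ∉ nilradical R → s * b ∈ I

/-- `I` is an `n`-ideal: `I` is proper and `a * b ∈ I` with `a` not nilpotent implies `b ∈ I`. -/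
def IsNIdeal {R : Type*} [CommRing R] (I : Ideal R) : Prop :=
  I ≠ ⊤ ∧ ∀ a b : R, a * b ∈ I → a ∉ nilradical R → b ∈ I

/-- `I` is an `S`-prime ideal. -/
def IsSPrime {R : Type*} [CommRing R] (S : Set R) (I : Ideal R) : Prop :=
  Disjoint S (I : Set R) ∧
    ∃ s ∈ S, ∀ a b : R, a * b ∈ I → s * a ∈ I ∨ s * b ∈ I
theorem stmt_9 {R : Type*} [CommRing R] [IsReduced R] (S : Submonoid R)
    (hreg : (S : Set R) ⊆ {r : R | r ∈ nonZeroDivisors R}) :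
    IsDomain R ↔ ∃ I : Ideal R, IsSPrime (S : Set R) I ∧ IsSnIdeal (S : Set R) I := by
  have hnil : ∀ x : R, x ∈ nilradical R ↔ x = 0 := by
    intro x
    rw [mem_nilradical]
    exact ⟨fun h => h.eq_zero, fun h => h ▸ IsNilpotent.zero⟩
  constructor
  · intro hdom
    refine ⟨⊥, ⟨?_, 1, S.one_mem, ?_⟩, ?_, 1, S.one_mem, ?_⟩
    · rw [Set.disjoint_right]
      intro x hx hxS
      simp only [SetLike.mem_coe, Ideal.mem_bot] at hx
      subst hx
      exact zero_notMem_nonZeroDivisors (hreg hxS)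
    · intro a b hab
      rcases mul_eq_zero.mp (Ideal.mem_bot.mp hab) with h | h <;>
        simp [Ideal.mem_bot, h]
    · rw [Set.disjoint_right]
      intro x hx hxS
      simp only [SetLike.mem_coe, Ideal.mem_bot] at hx
      subst hx
      exact zero_notMem_nonZeroDivisors (hreg hxS)
    · intro a b hab ha
      rcases mul_eq_zero.mp (Ideal.mem_bot.mp hab) with h | h
      · exact absurd ((hnil _).mpr (by rw [h, mul_zero])) ha
      · simp [Ideal.mem_bot, h]
  · rintro ⟨I, ⟨hdisj, s, hsS, hsp⟩, hdisj', t, htS, hsn⟩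
    -- I = ⊥
    have hI : I = ⊥ := by
      ext x
      simp only [Ideal.mem_bot]
      constructor
      · intro hx
        have h1 : x * 1 ∈ I := by rwa [mul_one]
        by_cases h : t * x ∈ nilradical R
        · have : t * x = 0 := (hnil _).mp h
          exact (mem_nonZeroDivisors_iff.mp (hreg htS)).2 x (by rwa [mul_comm] at this)
        · have := hsn x 1 h1 h
          rw [mul_one] at this
          exact absurd (Set.not_disjoint_iff.mpr ⟨t, htS, this⟩) (by simpa using hdisj')
      · rintro rfl; exact I.zero_mem
    subst hI
    have hnontriv : Nontrivial R := by
      by_contra h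
      have : (1 : R) = 0 := by
        rcases not_nontrivial_iff_subsingleton.mp h with ⟨hs⟩
        exact hs 1 0
      exact (Set.not_disjoint_iff.mpr ⟨1, S.one_mem, by
        simp only [SetLike.mem_coe, Ideal.mem_bot]; exact this⟩) hdisj
    have : NoZeroDivisors R := by
      constructor
      intro a b hab
      rcases hsp a b (Ideal.mem_bot.mpr hab) with h | h
      · exact Or.inl ((mem_nonZeroDivisors_iff.mp (hreg hsS)).2 a (by rw [mul_comm]; exact Ideal.mem_bot.mp h))
      · exact Or.inr ((mem_nonZeroDivisors_iff.mp (hreg hsS)).2 b (by rw [mul_comm]; exact Ideal.mem_bot.mp h))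
    exact NoZeroDivisors.to_isDomain R
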